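/- Let g ∈ ℂ[x₁,…,xₙ] and w ∈ ℂⁿ. Suppose the derivation δ = Σᵢ wᵢ xᵢ ∂ᵢ satisfies δ • g = λ g for some λ ∈ ℂ (i.e. g is w-quasi-homogeneous of w-degree λ). If g = g₁ · g₂ is a factorization, with g₁, g₂ each nonzero, then there exist λ₁, λ₂ ∈ ℂ with λ₁ + λ₂ = λ such that δ • gᵢ = λᵢ gᵢ for i = 1,2. -/

import Mathlib

open MvPolynomial Finsupp

noncomputable def cEmb : ℂ →+ ℝ ×ₗ ℝ where
  toFun z := toLex (z.re, z.im)
  map_zero' := rfl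
  map_add' _ _ := rfl

lemma cEmb_inj : Function.Injective cEmb := by
  intro a b h
  exact Complex.ext (congrArg (fun p => (ofLex p).1) h) (congrArg (fun p => (ofLex p).2) h)

lemma delta_monomial (n : ℕ) (w : Fin n → ℂ) (d : Fin n →₀ ℕ) (c : ℂ) :
    (∑ i, C (w i) * X i * pderiv i (monomial d c)) = C (weight w d) * monomial d c := by
  have h1 : ∀ i : Fin n, C (w i) * X i * pderiv i (monomial d c)
      = monomial d ((d i : ℂ) * w i * c) := by
    intro i
    rw [pderiv_monomial]
    by_cases hd : d i = 0
    · simp [hd]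
    · have hsum : Finsupp.single i 1 + (d - Finsupp.single i 1) = d := by
        ext j
        simp only [Finsupp.coe_add, Pi.add_apply, Finsupp.tsub_apply, Finsupp.single_apply]
        by_cases hj : i = j
        · subst hj
          simp only [if_true]
          omega
        · simp [hj]
      rw [X, mul_assoc, monomial_mul, hsum, C_mul_monomial]
      ring_nf
  rw [Finset.sum_congr rfl fun i _ => h1 i, ← map_sum (monomial d)]
  rw [C_mul_monomial]
  congr 1
  rw [← Finset.sum_mul]
  congr 1
  rw [weight_apply, Finsupp.sum_fintype]
  · exact Finset.sum_congr rfl fun i _ => by rw [nsmul_eq_mul]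
  · intro i; exact zero_smul _ _

lemma coeff_delta (n : ℕ) (w : Fin n → ℂ) (g : MvPolynomial (Fin n) ℂ) (a : Fin n →₀ ℕ) :
    coeff a (∑ i, C (w i) * X i * pderiv i g) = weight w a * coeff a g := by
  induction g using MvPolynomial.induction_on' with
  | monomial d c =>
    rw [delta_monomial, coeff_C_mul, coeff_monomial]
    split_ifs with hd
    · subst hd; rfl
    · simp
  | add p q hp hq =>
    simp only [map_add, mul_add, Finset.sum_add_distrib, coeff_add, hp, hq]

lemma delta_eq_iff (n : ℕ) (w : Fin n → ℂ) (g : MvPolynomial (Fin n) ℂ) (lam : ℂ) :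
    (∑ i, C (w i) * X i * pderiv i g) = C lam * g ↔
      ∀ a ∈ g.support, weight w a = lam := by
  constructor
  · intro h a ha
    have := congrArg (coeff a) h
    rw [coeff_delta, coeff_C_mul] at this
    exact mul_right_cancel₀ (MvPolynomial.mem_support_iff.mp ha) this
  · intro h
    ext a
    rw [coeff_delta, coeff_C_mul]
    by_cases ha : coeff a g = 0
    · rw [ha, mul_zero, mul_zero]
    · rw [h a (MvPolynomial.mem_support_iff.mpr ha)]

lemma helper {n : ℕ} (w : Fin n → ℂ) (e : ℂ →+ ℝ ×ₗ ℝ) (he : Function.Injective e)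
    (g₁ g₂ : MvPolynomial (Fin n) ℂ) (h₁ : g₁ ≠ 0) (h₂ : g₂ ≠ 0) (lam : ℂ)
    (h : ∀ a ∈ (g₁ * g₂).support, weight w a = lam) :
    ∃ μ₁ μ₂ : ℂ, μ₁ + μ₂ = lam ∧
      (∃ a ∈ g₁.support, weight w a = μ₁) ∧ (∀ a ∈ g₁.support, e (weight w a) ≤ e μ₁) ∧
      (∃ a ∈ g₂.support, weight w a = μ₂) ∧ (∀ a ∈ g₂.support, e (weight w a) ≤ e μ₂) := by
  classical
  obtain ⟨a₁, ha₁, hmax₁⟩ := Finset.exists_max_image g₁.support (fun a => e (weight w a))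
    (support_nonempty.mpr h₁)
  obtain ⟨a₂, ha₂, hmax₂⟩ := Finset.exists_max_image g₂.support (fun a => e (weight w a))
    (support_nonempty.mpr h₂)
  set μ₁ := weight w a₁ with hμ₁
  set μ₂ := weight w a₂ with hμ₂
  set T₁ := weightedHomogeneousComponent w μ₁ g₁ with hT₁
  set T₂ := weightedHomogeneousComponent w μ₂ g₂ with hT₂
  have hT₁ne : T₁ ≠ 0 := by
    intro h0
    have := congrArg (coeff a₁) h0
    rw [hT₁, coeff_weightedHomogeneousComponent, if_pos rfl] at this
    exact MvPolynomial.mem_support_iff.mp ha₁ this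
  have hT₂ne : T₂ ≠ 0 := by
    intro h0
    have := congrArg (coeff a₂) h0
    rw [hT₂, coeff_weightedHomogeneousComponent, if_pos rfl] at this
    exact MvPolynomial.mem_support_iff.mp ha₂ this
  have hh₁ : T₁.IsWeightedHomogeneous w μ₁ :=
    weightedHomogeneousComponent_isWeightedHomogeneous μ₁ g₁
  have hh₂ : T₂.IsWeightedHomogeneous w μ₂ :=
    weightedHomogeneousComponent_isWeightedHomogeneous μ₂ g₂
  obtain ⟨b, hb⟩ := support_nonempty.mpr (mul_ne_zero hT₁ne hT₂ne)
  have hWb : weight w b = μ₁ + μ₂ := (hh₁.mul hh₂) (MvPolynomial.mem_support_iff.mp hb)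
  -- supports of residues
  have hres : ∀ (g T : MvPolynomial (Fin n) ℂ) (μ : ℂ),
      T = weightedHomogeneousComponent w μ g →
      ∀ y ∈ (g - T).support, y ∈ g.support ∧ weight w y ≠ μ := by
    intro g T μ hT y hy
    have hy' : coeff y g - coeff y T ≠ 0 := by
      simpa [coeff_sub] using MvPolynomial.mem_support_iff.mp hy
    rw [hT, coeff_weightedHomogeneousComponent] at hy'
    by_cases hw : weight w y = μ
    · rw [if_pos hw, sub_self] at hy'; exact absurd rfl hy'
    · rw [if_neg hw, sub_zero] at hy'
      exact ⟨MvPolynomial.mem_support_iff.mpr hy', hw⟩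
  -- coeff b of cross terms vanish
  have hcross₁ : coeff b (T₁ * (g₂ - T₂)) = 0 := by
    by_contra hc
    have hb' := MvPolynomial.support_mul T₁ (g₂ - T₂) (MvPolynomial.mem_support_iff.mpr hc)
    rw [Finset.mem_add] at hb'
    obtain ⟨x, hx, y, hy, hxy⟩ := hb'
    have hwx : weight w x = μ₁ := hh₁ (MvPolynomial.mem_support_iff.mp hx)
    obtain ⟨hy₂, hwy⟩ := hres g₂ T₂ μ₂ hT₂ y hy
    have hlt : e (weight w y) < e μ₂ :=
      lt_of_le_of_ne (hmax₂ y hy₂) (fun hcon => hwy (he hcon))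
    have : e (weight w b) < e μ₁ + e μ₂ := by
      rw [← hxy, map_add, map_add, hwx]
      exact add_lt_add_right hlt _
    rw [hWb, map_add] at this
    exact lt_irrefl _ this
  have hcross₂ : coeff b ((g₁ - T₁) * g₂) = 0 := by
    by_contra hc
    have hb' := MvPolynomial.support_mul (g₁ - T₁) g₂ (MvPolynomial.mem_support_iff.mpr hc)
    rw [Finset.mem_add] at hb'
    obtain ⟨x, hx, y, hy, hxy⟩ := hb'
    obtain ⟨hx₁, hwx⟩ := hres g₁ T₁ μ₁ hT₁ x hx
    have hlt : e (weight w x) < e μ₁ :=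
      lt_of_le_of_ne (hmax₁ x hx₁) (fun hcon => hwx (he hcon))
    have : e (weight w b) < e μ₁ + e μ₂ := by
      rw [← hxy, map_add, map_add]
      exact add_lt_add_of_lt_of_le hlt (hmax₂ y hy)
    rw [hWb, map_add] at this
    exact lt_irrefl _ this
  have hsplit : g₁ * g₂ = T₁ * T₂ + (T₁ * (g₂ - T₂) + (g₁ - T₁) * g₂) := by ring
  have hcb : coeff b (g₁ * g₂) = coeff b (T₁ * T₂) := by
    rw [hsplit, coeff_add, coeff_add, hcross₁, hcross₂]; ring
  have hbmem : b ∈ (g₁ * g₂).support := by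
    rw [MvPolynomial.mem_support_iff, hcb]; exact MvPolynomial.mem_support_iff.mp hb
  refine ⟨μ₁, μ₂, ?_, ⟨a₁, ha₁, rfl⟩, hmax₁, ⟨a₂, ha₂, rfl⟩, hmax₂⟩
  rw [← hWb, h b hbmem]

theorem quasi_homogeneous_of_factor (n : ℕ) (w : Fin n → ℂ)
    (g₁ g₂ : MvPolynomial (Fin n) ℂ) (h₁ : g₁ ≠ 0) (h₂ : g₂ ≠ 0) (lam : ℂ)
    (h : (∑ i, C (w i) * X i * pderiv i (g₁ * g₂)) = C lam * (g₁ * g₂)) :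
    ∃ lam₁ lam₂ : ℂ, lam₁ + lam₂ = lam ∧
      (∑ i, C (w i) * X i * pderiv i g₁) = C lam₁ * g₁ ∧
      (∑ i, C (w i) * X i * pderiv i g₂) = C lam₂ * g₂ := by
  have hsupp : ∀ a ∈ (g₁ * g₂).support, weight w a = lam :=
    (delta_eq_iff n w (g₁ * g₂) lam).mp h
  obtain ⟨μ₁, μ₂, hμ, ⟨b₁, hb₁, hwb₁⟩, hmax₁, ⟨b₂, hb₂, hwb₂⟩, hmax₂⟩ :=
    helper w cEmb cEmb_inj g₁ g₂ h₁ h₂ lam hsupp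
  obtain ⟨ν₁, ν₂, hν, ⟨c₁, hc₁, hwc₁⟩, hmin₁, ⟨c₂, hc₂, hwc₂⟩, hmin₂⟩ :=
    helper w (-cEmb) (fun a b hab => cEmb_inj (neg_injective hab)) g₁ g₂ h₁ h₂ lam hsupp
  -- hmin gives: ∀ a ∈ support, -e (weight a) ≤ -e ν, i.e. e ν ≤ e (weight a)
  have hmin₁' : ∀ a ∈ g₁.support, cEmb ν₁ ≤ cEmb (weight w a) := by
    intro a ha; have := hmin₁ a ha; simpa using this
  have hmin₂' : ∀ a ∈ g₂.support, cEmb ν₂ ≤ cEmb (weight w a) := by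
    intro a ha; have := hmin₂ a ha; simpa using this
  have hle₁ : cEmb ν₁ ≤ cEmb μ₁ := le_trans (hmin₁' b₁ hb₁) (hwb₁ ▸ le_refl _)
  have hle₂ : cEmb ν₂ ≤ cEmb μ₂ := le_trans (hmin₂' b₂ hb₂) (hwb₂ ▸ le_refl _)
  have hsum : cEmb μ₁ + cEmb μ₂ = cEmb ν₁ + cEmb ν₂ := by
    rw [← map_add, ← map_add, hμ, hν]
  have heq₁ : cEmb μ₁ = cEmb ν₁ := by
    refine le_antisymm ?_ hle₁
    have : cEmb μ₁ + cEmb μ₂ ≤ cEmb ν₁ + cEmb μ₂ := by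
      rw [hsum]; exact add_le_add_right hle₂ _
    exact le_of_add_le_add_right this
  have heq₂ : cEmb μ₂ = cEmb ν₂ := by
    have := hsum
    rw [heq₁] at this
    exact add_left_cancel this
  refine ⟨μ₁, μ₂, hμ, ?_, ?_⟩
  · rw [delta_eq_iff]
    intro a ha
    apply cEmb_inj
    exact le_antisymm (hmax₁ a ha) (heq₁ ▸ hmin₁' a ha)
  · rw [delta_eq_iff]
    intro a ha
    apply cEmb_inj
    exact le_antisymm (hmax₂ a ha) (heq₂ ▸ hmin₂' a ha)
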